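/- Let G and H be finite graphs on the same number of vertices such that the C_1 colors of all vertices of G are pairwise distinct and S_1(G) = S_1(H) as sets. If G and H are not isomorphic, then S_2(G) ≠ S_2(H). -/

import Mathlib

/-- Codomain of the round-`r` color refinement coloring. -/
def ColorType : ℕ → Type
  | 0 => ℕ
  | r + 1 => Multiset (ColorType r)

/-- The color refinement colorings: `C 0 x = deg x` and `C (r+1) x` is the
multiset of round-`r` colors of the neighbors of `x`. -/
def CR {V : Type*} [Fintype V] (G : SimpleGraph V) [DecidableRel G.Adj] :
    (r : ℕ) → V → ColorType r
  | 0, x => G.degree x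
  | r + 1, x => (G.neighborFinset x).val.map (CR G r)

instance colorDecEq : (r : ℕ) → DecidableEq (ColorType r)
  | 0 => inferInstanceAs (DecidableEq ℕ)
  | r + 1 => letI := colorDecEq r; inferInstanceAs (DecidableEq (Multiset (ColorType r)))

lemma CR_card {V : Type*} [Fintype V] (G : SimpleGraph V) [DecidableRel G.Adj]
    (x : V) : Multiset.card (show Multiset (ColorType 0) from CR G 1 x) = G.degree x := by
  show Multiset.card ((G.neighborFinset x).val.map (CR G 0)) = _
  rw [Multiset.card_map]
  rfl

lemma map_card_CR2 {V : Type*} [Fintype V] (G : SimpleGraph V) [DecidableRel G.Adj]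
    (x : V) :
    Multiset.map Multiset.card (show Multiset (ColorType 1) from CR G 2 x) = CR G 1 x := by
  show Multiset.map _ ((G.neighborFinset x).val.map (CR G 1))
      = (G.neighborFinset x).val.map (CR G 0)
  refine (Multiset.map_map _ _ _).trans ?_
  refine Multiset.map_congr rfl fun y _ => ?_
  exact CR_card G y

lemma mem_CR2 {V : Type*} [Fintype V] (G : SimpleGraph V) [DecidableRel G.Adj]
    (hinj : Function.Injective (CR G 1)) (x y : V) :
    CR G 1 y ∈ (show Multiset (ColorType 1) from CR G 2 x) ↔ G.Adj x y := by
  show CR G 1 y ∈ (G.neighborFinset x).val.map (CR G 1) ↔ _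
  rw [Multiset.mem_map]
  constructor
  · rintro ⟨a, ha, hay⟩
    rw [← hinj hay]
    simpa using ha
  · intro h
    exact ⟨y, by simpa using h, rfl⟩

theorem S2_distinguishes {V W : Type*} [Fintype V] [Fintype W]
    (G : SimpleGraph V) (H : SimpleGraph W)
    [DecidableRel G.Adj] [DecidableRel H.Adj]
    (hcard : Fintype.card V = Fintype.card W)
    (hinj : Function.Injective (CR G 1))
    (hS1 : Set.range (CR G 1) = Set.range (CR H 1))
    (hniso : ¬ Nonempty (G ≃g H)) :
    Set.range (CR G 2) ≠ Set.range (CR H 2) := by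
  intro hS2
  apply hniso
  -- CR H 1 is injective
  classical
  have hginj : Function.Injective (CR H 1) := by
    have h1 : Nat.card W = Nat.card (Set.range (CR H 1)) := by
      rw [← hS1, Nat.card_range_of_injective hinj]
      simp [Nat.card_eq_fintype_card, hcard]
    have hb : Function.Bijective (Set.rangeFactorization (CR H 1)) :=
      (Nat.bijective_iff_surjective_and_card _).2
        ⟨Set.rangeFactorization_surjective, h1⟩
    intro a b hab
    exact hb.injective (Subtype.ext hab)
  -- the bijection matching CR 1 colors
  let φ : V ≃ W :=
    (Equiv.ofInjective _ hinj).trans ((Equiv.setCongr hS1).trans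
      (Equiv.ofInjective _ hginj).symm)
  have hφ : ∀ v, CR H 1 (φ v) = CR G 1 v := by
    intro v
    simpa [φ] using Equiv.apply_ofInjective_symm hginj
      (⟨CR G 1 v, hS1 ▸ Set.mem_range_self v⟩ : Set.range (CR H 1))
  -- φ preserves CR 2 colors
  have hφ2 : ∀ v, CR H 2 (φ v) = CR G 2 v := by
    intro v
    obtain ⟨w, hw⟩ : CR G 2 v ∈ Set.range (CR H 2) := hS2 ▸ Set.mem_range_self v
    have : CR H 1 w = CR G 1 v := by
      rw [← map_card_CR2 H w, ← map_card_CR2 G v]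
      exact congrArg _ hw
    have hwφ : w = φ v := hginj (this.trans (hφ v).symm)
    rw [← hwφ, hw]
  exact ⟨{ toEquiv := φ
           map_rel_iff' := by
             intro u v
             rw [← mem_CR2 G hinj u v, ← mem_CR2 H hginj (φ u) (φ v), hφ v, hφ2 u] }⟩
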